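/- Fix m ≥ 1, let (e_1,…,e_m) be the standard orthonormal basis of Euclidean ℝ^m, and let τ = Σ_{i=1}^{m} e_i ⊗ e_i ⊗ e_i ∈ ℝ^m ⊗ ℝ^m ⊗ ℝ^m. For linear isometries A, B, C of ℝ^m, the equality Σ_{i=1}^{m} A e_i ⊗ B e_i ⊗ C e_i = τ holds if and only if there exist a permutation σ of {1,…,m} and functions ε, η : {1,…,m} → {+1,−1} such that for every i: A e_i = ε_i e_{σ(i)}, B e_i = η_i e_{σ(i)}, and C e_i = ε_i η_i e_{σ(i)}. -/

import Mathlib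

open scoped BigOperators TensorProduct

noncomputable section

/-- Coordinate functional on Euclidean space. -/
def coordL (m : ℕ) (j : Fin m) : EuclideanSpace ℝ (Fin m) →ₗ[ℝ] ℝ where
  toFun x := x j
  map_add' _ _ := rfl
  map_smul' _ _ := rfl

/-- Triple coordinate functional on the triple tensor product. -/
def coordT (m : ℕ) (j k l : Fin m) :
    (EuclideanSpace ℝ (Fin m) ⊗[ℝ] (EuclideanSpace ℝ (Fin m) ⊗[ℝ] EuclideanSpace ℝ (Fin m)))
      →ₗ[ℝ] ℝ :=
  TensorProduct.lift ((LinearMap.mul ℝ ℝ).compl₁₂ (coordL m j)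
    (TensorProduct.lift ((LinearMap.mul ℝ ℝ).compl₁₂ (coordL m k) (coordL m l))))

lemma coordT_tmul (m : ℕ) (j k l : Fin m) (x y z : EuclideanSpace ℝ (Fin m)) :
    coordT m j k l (x ⊗ₜ[ℝ] (y ⊗ₜ[ℝ] z)) = x j * (y k * z l) := by
  simp [coordT, coordL]
  rfl

lemma orth_aux (m : ℕ) (A : EuclideanSpace ℝ (Fin m) ≃ₗᵢ[ℝ] EuclideanSpace ℝ (Fin m))
    (p q : Fin m) :
    ∑ j, A (EuclideanSpace.single p (1:ℝ)) j * A (EuclideanSpace.single q 1) j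
      = if p = q then 1 else 0 := by
  have h := A.inner_map_map (EuclideanSpace.single p (1:ℝ)) (EuclideanSpace.single q 1)
  simp only [PiLp.inner_apply, RCLike.inner_apply, conj_trivial] at h
  rw [show (∑ j, A (EuclideanSpace.single p (1:ℝ)) j * A (EuclideanSpace.single q 1) j)
      = ∑ j, A (EuclideanSpace.single q (1:ℝ)) j * A (EuclideanSpace.single p 1) j from
      Finset.sum_congr rfl (fun j _ => mul_comm _ _), h]
  simp [EuclideanSpace.single_apply, Finset.sum_ite_eq, eq_comm]

lemma eq_smul_single {m : ℕ} (x : EuclideanSpace ℝ (Fin m)) (k : Fin m) (r : ℝ)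
    (h : ∀ l, x l = if l = k then r else 0) : x = r • EuclideanSpace.single k 1 := by
  ext l
  rw [h l]
  simp only [PiLp.smul_apply, EuclideanSpace.single_apply, smul_eq_mul, mul_ite, mul_one, mul_zero]

/-- for linear isometries `A, B, C` of Euclidean `ℝ^m`, the tensor
`∑ᵢ Aeᵢ ⊗ Beᵢ ⊗ Ceᵢ` equals `τ = ∑ᵢ eᵢ ⊗ eᵢ ⊗ eᵢ` iff `A, B, C` are signed permutations
with a common underlying permutation `σ` and signs `ε, η, ε·η` respectively. -/
theorem stabilizer_of_diagonal_tensor (m : ℕ) (hm : 1 ≤ m)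
    (A B C : EuclideanSpace ℝ (Fin m) ≃ₗᵢ[ℝ] EuclideanSpace ℝ (Fin m)) :
    (∑ i : Fin m,
        A (EuclideanSpace.single i (1 : ℝ)) ⊗ₜ[ℝ]
          (B (EuclideanSpace.single i (1 : ℝ)) ⊗ₜ[ℝ] C (EuclideanSpace.single i (1 : ℝ)))
      = ∑ i : Fin m,
          EuclideanSpace.single i (1 : ℝ) ⊗ₜ[ℝ]
            (EuclideanSpace.single i (1 : ℝ) ⊗ₜ[ℝ] EuclideanSpace.single i (1 : ℝ)))
    ↔ ∃ (σ : Equiv.Perm (Fin m)) (ε η : Fin m → ℝ),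
        (∀ i, ε i = 1 ∨ ε i = -1) ∧ (∀ i, η i = 1 ∨ η i = -1) ∧
        (∀ i, A (EuclideanSpace.single i (1 : ℝ)) = ε i • EuclideanSpace.single (σ i) (1 : ℝ)
          ∧ B (EuclideanSpace.single i (1 : ℝ)) = η i • EuclideanSpace.single (σ i) (1 : ℝ)
          ∧ C (EuclideanSpace.single i (1 : ℝ))
              = (ε i * η i) • EuclideanSpace.single (σ i) (1 : ℝ)) := by
  constructor
  · intro hyp
    set a : Fin m → Fin m → ℝ := fun i j => A (EuclideanSpace.single i (1:ℝ)) j with ha_def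
    set b : Fin m → Fin m → ℝ := fun i j => B (EuclideanSpace.single i (1:ℝ)) j with hb_def
    set c : Fin m → Fin m → ℝ := fun i j => C (EuclideanSpace.single i (1:ℝ)) j with hc_def
    have orthA : ∀ p q, ∑ j, a p j * a q j = if p = q then 1 else 0 := fun p q => orth_aux m A p q
    have orthB : ∀ p q, ∑ j, b p j * b q j = if p = q then 1 else 0 := fun p q => orth_aux m B p q
    have orthC : ∀ p q, ∑ j, c p j * c q j = if p = q then 1 else 0 := fun p q => orth_aux m C p q
    -- coordinate form of the hypothesis
    have H : ∀ j k l : Fin m, ∑ i, a i j * (b i k * c i l)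
        = (if j = k then (1:ℝ) else 0) * (if j = l then 1 else 0) := by
      intro j k l
      have h := congrArg (coordT m j k l) hyp
      rw [map_sum, map_sum] at h
      simp only [coordT_tmul] at h
      rw [h]
      simp only [EuclideanSpace.single_apply]
      rw [Finset.sum_eq_single j]
      · simp [eq_comm]
      · intro i _ hij
        simp [Ne.symm hij]
      · simp
    -- the contraction identity
    have star : ∀ p k l : Fin m, b p k * c p l = if k = l then a p k else 0 := by
      intro p k l
      have h1 : b p k * c p l = ∑ i, (if p = i then (1:ℝ) else 0) * (b i k * c i l) := by
        simp_rw [ite_mul, one_mul, zero_mul]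
        rw [Finset.sum_ite_eq]
        simp
      rw [h1]
      have h2 : ∀ i, (if p = i then (1:ℝ) else 0) * (b i k * c i l)
          = ∑ j, a p j * a i j * (b i k * c i l) := by
        intro i
        rw [← Finset.sum_mul, orthA]
      simp_rw [h2]
      rw [Finset.sum_comm]
      have h3 : ∀ j, ∑ i, a p j * a i j * (b i k * c i l)
          = a p j * ((if j = k then (1:ℝ) else 0) * (if j = l then 1 else 0)) := by
        intro j
        rw [← H j k l, Finset.mul_sum]
        congr 1; funext i; ring
      simp_rw [h3]
      rcases eq_or_ne k l with rfl | hkl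
      · simp only [if_pos rfl, mul_one]
        rw [Finset.sum_eq_single k]
        · simp
        · intro j _ hj; simp [hj]
        · simp
      · rw [if_neg hkl]
        apply Finset.sum_eq_zero
        intro j _
        rcases eq_or_ne j k with rfl | hj
        · simp [hkl]
        · simp [hj]
    -- per-index structure
    have key : ∀ p : Fin m, ∃ k : Fin m, b p k * b p k = 1 ∧ c p k * c p k = 1 ∧
        (∀ l, l ≠ k → b p l = 0 ∧ c p l = 0) ∧
        (∀ l, a p l = if l = k then b p k * c p k else 0) := by
      intro p
      have hbnorm : ∑ j, b p j * b p j = 1 := by rw [orthB p p]; simp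
      have hcnorm : ∑ j, c p j * c p j = 1 := by rw [orthC p p]; simp
      have hex : ∃ k, b p k ≠ 0 := by
        by_contra hall
        push_neg at hall
        rw [Finset.sum_eq_zero (fun j _ => by rw [hall j, zero_mul])] at hbnorm
        exact one_ne_zero hbnorm.symm
      obtain ⟨k, hbk⟩ := hex
      have hc0 : ∀ l, l ≠ k → c p l = 0 := by
        intro l hl
        have hs := star p k l
        rw [if_neg (fun h => hl h.symm)] at hs
        exact (mul_eq_zero.mp hs).resolve_left hbk
      have hck2 : c p k * c p k = 1 := by
        rw [← hcnorm, Finset.sum_eq_single k]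
        · intro j _ hj; rw [hc0 j hj, mul_zero]
        · simp
      have hck : c p k ≠ 0 := by
        intro h; rw [h, mul_zero] at hck2; exact zero_ne_one hck2
      have hb0 : ∀ l, l ≠ k → b p l = 0 := by
        intro l hl
        have hs := star p l k
        rw [if_neg hl] at hs
        exact (mul_eq_zero.mp hs).resolve_right hck
      have hbk2 : b p k * b p k = 1 := by
        rw [← hbnorm, Finset.sum_eq_single k]
        · intro j _ hj; rw [hb0 j hj, mul_zero]
        · simp
      refine ⟨k, hbk2, hck2, fun l hl => ⟨hb0 l hl, hc0 l hl⟩, ?_⟩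
      intro l
      have hs := (star p l l).symm
      rw [if_pos rfl] at hs
      rcases eq_or_ne l k with rfl | hl
      · rw [if_pos rfl]; exact hs
      · rw [if_neg hl, hs, hb0 l hl, zero_mul]
    choose σ₀ hb2 hc2 hzero ha using key
    have hσinj : Function.Injective σ₀ := by
      intro p q hpq
      by_contra hne
      have h0 := orthA p q
      rw [if_neg hne] at h0
      have h1 : ∑ j, a p j * a q j = (b p (σ₀ p) * c p (σ₀ p)) * (b q (σ₀ q) * c q (σ₀ q)) := by
        rw [Finset.sum_eq_single (σ₀ p)]
        · rw [ha p (σ₀ p), ha q (σ₀ p), if_pos rfl, if_pos hpq]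
        · intro j _ hj
          rw [ha p j, if_neg hj, zero_mul]
        · simp
      rw [h1] at h0
      have hsq : ((b p (σ₀ p) * c p (σ₀ p)) * (b q (σ₀ q) * c q (σ₀ q)))
          * ((b p (σ₀ p) * c p (σ₀ p)) * (b q (σ₀ q) * c q (σ₀ q)))
          = (b p (σ₀ p) * b p (σ₀ p)) * ((c p (σ₀ p) * c p (σ₀ p))
            * ((b q (σ₀ q) * b q (σ₀ q)) * (c q (σ₀ q) * c q (σ₀ q)))) := by ring
      rw [h0, zero_mul, hb2, hc2, hb2, hc2] at hsq
      norm_num at hsq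
    have hσbij : Function.Bijective σ₀ := (Finite.injective_iff_bijective).mp hσinj
    refine ⟨Equiv.ofBijective σ₀ hσbij,
      fun p => b p (σ₀ p) * c p (σ₀ p), fun p => b p (σ₀ p), ?_, ?_, ?_⟩
    · intro p
      apply mul_self_eq_one_iff.mp
      have hsq : (b p (σ₀ p) * c p (σ₀ p)) * (b p (σ₀ p) * c p (σ₀ p))
          = (b p (σ₀ p) * b p (σ₀ p)) * (c p (σ₀ p) * c p (σ₀ p)) := by ring
      rw [hsq, hb2, hc2, one_mul]
    · intro p
      exact mul_self_eq_one_iff.mp (hb2 p)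
    · intro p
      refine ⟨?_, ?_, ?_⟩
      · exact eq_smul_single _ _ _ (fun l => ha p l)
      · apply eq_smul_single
        intro l
        show B (EuclideanSpace.single p (1:ℝ)) l = if l = σ₀ p then b p (σ₀ p) else 0
        rcases eq_or_ne l (σ₀ p) with rfl | hl
        · rw [if_pos rfl]
        · rw [if_neg hl]
          exact (hzero p l hl).1
      · apply eq_smul_single
        intro l
        show C (EuclideanSpace.single p (1:ℝ)) l
          = if l = σ₀ p then (b p (σ₀ p) * c p (σ₀ p)) * b p (σ₀ p) else 0
        rcases eq_or_ne l (σ₀ p) with rfl | hl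
        · rw [if_pos rfl]
          have hsc : (b p (σ₀ p) * c p (σ₀ p)) * b p (σ₀ p)
              = (b p (σ₀ p) * b p (σ₀ p)) * c p (σ₀ p) := by ring
          rw [hsc, hb2, one_mul]
        · rw [if_neg hl]
          exact (hzero p l hl).2
  · rintro ⟨σ, ε, η, hε, hη, h⟩
    have hterm : ∀ i : Fin m,
        A (EuclideanSpace.single i (1 : ℝ)) ⊗ₜ[ℝ]
          (B (EuclideanSpace.single i (1 : ℝ)) ⊗ₜ[ℝ] C (EuclideanSpace.single i (1 : ℝ)))
        = EuclideanSpace.single (σ i) (1:ℝ) ⊗ₜ[ℝ]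
            (EuclideanSpace.single (σ i) (1:ℝ) ⊗ₜ[ℝ] EuclideanSpace.single (σ i) (1:ℝ)) := by
      intro i
      obtain ⟨h1, h2, h3⟩ := h i
      rw [h1, h2, h3]
      rcases hε i with h1' | h1' <;> rcases hη i with h2' | h2' <;>
        simp [h1', h2', TensorProduct.smul_tmul', TensorProduct.tmul_smul, smul_smul,
          TensorProduct.neg_tmul, TensorProduct.tmul_neg, neg_neg]
    rw [Finset.sum_congr rfl (fun i _ => hterm i)]
    exact Equiv.sum_comp σ (fun j => EuclideanSpace.single j (1:ℝ) ⊗ₜ[ℝ]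
      (EuclideanSpace.single j (1:ℝ) ⊗ₜ[ℝ] EuclideanSpace.single j (1:ℝ)))
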